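/- For all even integers n and all real r, the derivative in r of α(n, 1/2 + ir) = ∏_{k=0}^{|n|/2-1} (1/2 - ir + k)/(1/2 + ir + k) satisfies |d/dr α(n, 1/2 + ir)| ≪ 1 + log(1 + |n|/2), with an absolute implied constant. -/

import Mathlib

open Complex

lemma denom_ne (k : ℕ) (r : ℝ) : (1/2 + (r : ℂ) * I + (k : ℂ)) ≠ 0 := by
  intro h
  have h1 : ((1/2 + (r : ℂ) * I + (k : ℂ)).re = 1/2 + k) := by
    simp [Complex.add_re, Complex.mul_re]
  have h0 : (0:ℝ) ≤ (k:ℝ) := Nat.cast_nonneg k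
  rw [h] at h1
  simp at h1
  linarith

lemma hasDerivAt_g (k : ℕ) (r : ℝ) :
    HasDerivAt (fun r : ℝ => (1/2 - (r : ℂ) * I + (k : ℂ)) / (1/2 + (r : ℂ) * I + (k : ℂ)))
      ((-I * (1 + 2*(k:ℂ))) / (1/2 + (r : ℂ) * I + (k : ℂ))^2) r := by
  have hri : HasDerivAt (fun r : ℝ => (r : ℂ) * I) I r := by
    simpa using (Complex.ofRealCLM.hasDerivAt (x := r)).mul_const I
  have hu : HasDerivAt (fun r : ℝ => 1/2 - (r : ℂ) * I + (k : ℂ)) (-I) r := by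
    exact ((hri.const_sub (1/2)).add_const (k:ℂ))
  have hv : HasDerivAt (fun r : ℝ => 1/2 + (r : ℂ) * I + (k : ℂ)) I r := by
    exact ((hri.const_add (1/2)).add_const (k:ℂ))
  have := hu.div hv (denom_ne k r)
  convert this using 1
  · rfl
  congr 1
  ring

lemma abs_g_one (k : ℕ) (r : ℝ) :
    ‖(1/2 - (r : ℂ) * I + (k : ℂ)) / (1/2 + (r : ℂ) * I + (k : ℂ))‖ = 1 := by
  have hc : (1/2 - (r : ℂ) * I + (k : ℂ)) = (starRingEnd ℂ) (1/2 + (r : ℂ) * I + (k : ℂ)) := by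
    have : ((1:ℂ)/2) = ((1/2 : ℝ) : ℂ) := by norm_num
    rw [this, map_add, map_add, map_mul, Complex.conj_I, Complex.conj_ofReal,
      Complex.conj_ofReal, Complex.conj_natCast]
    ring
  rw [norm_div, hc, Complex.norm_conj, div_self]
  exact (norm_ne_zero_iff.mpr (denom_ne k r))

lemma abs_d_le (k : ℕ) (r : ℝ) :
    ‖(-I * (1 + 2*(k:ℂ))) / (1/2 + (r : ℂ) * I + (k : ℂ))^2‖ ≤ 4 / (k + 1 : ℝ) := by
  have h1 : ‖-I * (1 + 2*(k:ℂ))‖ = 1 + 2*(k:ℝ) := by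
    have : (1 + 2*(k:ℂ)) = ((1 + 2*(k:ℝ) : ℝ) : ℂ) := by push_cast; ring
    rw [norm_mul, this, Complex.norm_of_nonneg (by positivity)]
    simp
  have h2 : ‖1/2 + (r : ℂ) * I + (k : ℂ)‖^2 = (1/2 + (k:ℝ))^2 + r^2 := by
    rw [Complex.sq_norm, Complex.normSq_apply]
    simp [Complex.add_re, Complex.add_im, Complex.mul_re, Complex.mul_im]
    ring
  rw [norm_div, norm_pow, h1, h2]
  rw [div_le_div_iff₀ (by positivity) (by positivity)]
  nlinarith [sq_nonneg r, sq_nonneg (k:ℝ), Nat.cast_nonneg (α := ℝ) k]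

theorem stmt_1 : ∃ C : ℝ, 0 < C ∧ ∀ (n : ℤ), Even n → ∀ r : ℝ,
    ‖deriv (fun r : ℝ =>
        ∏ k ∈ Finset.range (n.natAbs / 2),
          ((1/2 - (r : ℂ) * I + (k : ℂ)) / (1/2 + (r : ℂ) * I + (k : ℂ)))) r‖
      ≤ C * (1 + Real.log (1 + (n.natAbs : ℝ) / 2)) := by
  refine ⟨8, by norm_num, fun n hn r => ?_⟩
  set N := n.natAbs / 2 with hN
  have he : Even n.natAbs := Int.natAbs_even.mpr hn
  have h2N : 2 * N = n.natAbs := by obtain ⟨m, hm⟩ := he; omega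
  have hcast : (n.natAbs : ℝ) / 2 = (N : ℝ) := by
    rw [show (n.natAbs : ℝ) = 2 * (N : ℝ) by exact_mod_cast h2N.symm]; ring
  rw [hcast]
  have hD := HasDerivAt.finset_prod (u := Finset.range N)
    (f := fun (k : ℕ) (r : ℝ) => ((1/2 - (r : ℂ) * I + (k : ℂ)) / (1/2 + (r : ℂ) * I + (k : ℂ))))
    (f' := fun (k : ℕ) => (-I * (1 + 2*(k:ℂ))) / (1/2 + (r : ℂ) * I + (k : ℂ))^2)
    (x := r) (fun i _ => hasDerivAt_g i r)
  have hderiv : deriv (fun r : ℝ =>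
      ∏ k ∈ Finset.range N,
        ((1/2 - (r : ℂ) * I + (k : ℂ)) / (1/2 + (r : ℂ) * I + (k : ℂ)))) r
      = ∑ i ∈ Finset.range N,
          (∏ j ∈ (Finset.range N).erase i,
            ((1/2 - (r : ℂ) * I + (j : ℂ)) / (1/2 + (r : ℂ) * I + (j : ℂ)))) •
          ((-I * (1 + 2*(i:ℂ))) / (1/2 + (r : ℂ) * I + (i : ℂ))^2) := by
    rw [← hD.deriv, Finset.prod_fn]
  rw [hderiv]
  have hterm : ∀ i ∈ Finset.range N,
      ‖(∏ j ∈ (Finset.range N).erase i,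
          ((1/2 - (r : ℂ) * I + (j : ℂ)) / (1/2 + (r : ℂ) * I + (j : ℂ)))) •
          ((-I * (1 + 2*(i:ℂ))) / (1/2 + (r : ℂ) * I + (i : ℂ))^2)‖ ≤ 4 / (i + 1 : ℝ) := by
    intro i _
    rw [smul_eq_mul, norm_mul, norm_prod]
    have : ∏ j ∈ (Finset.range N).erase i,
        ‖(1/2 - (r : ℂ) * I + (j : ℂ)) / (1/2 + (r : ℂ) * I + (j : ℂ))‖ = 1 := by
      apply Finset.prod_eq_one; intro j _; exact abs_g_one j r
    rw [this, one_mul]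
    exact abs_d_le i r
  calc ‖∑ i ∈ Finset.range N, _‖ ≤
        ∑ i ∈ Finset.range N, ‖(∏ j ∈ (Finset.range N).erase i,
          ((1/2 - (r : ℂ) * I + (j : ℂ)) / (1/2 + (r : ℂ) * I + (j : ℂ)))) •
          ((-I * (1 + 2*(i:ℂ))) / (1/2 + (r : ℂ) * I + (i : ℂ))^2)‖ :=
      norm_sum_le _ _
    _ ≤ ∑ i ∈ Finset.range N, 4 / (i + 1 : ℝ) := Finset.sum_le_sum hterm
    _ = 4 * (harmonic N : ℝ) := by
        rw [harmonic]
        push_cast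
        rw [Finset.mul_sum]
        refine Finset.sum_congr rfl fun i _ => ?_
        rw [div_eq_mul_inv]
    _ ≤ 4 * (1 + Real.log N) := by
        have := harmonic_le_one_add_log N
        linarith
    _ ≤ 8 * (1 + Real.log (1 + (N:ℝ))) := by
        have hlog : Real.log N ≤ Real.log (1 + (N:ℝ)) := by
          rcases Nat.eq_zero_or_pos N with h | h
          · simp [h]
          · exact Real.log_le_log (by exact_mod_cast h) (by linarith)
        have hlognn : 0 ≤ Real.log (1 + (N:ℝ)) :=
          Real.log_nonneg (le_add_of_nonneg_right (Nat.cast_nonneg N))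
        linarith
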